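/- Let A be a central simple algebra over a field K with an exhaustive, separated filtration FA extending a filtration FK on K with nontrivial negative part (F_{-n}K ≠ 0 for all n ≥ 0). If M is an irreducible left FA-glider ideal that is not a left A-module, then M has infinite essential length: for every d ≥ 0 there exists n > d with M_n ⊋ M_{n+1}. -/

import Mathlib

/-- A ℤ-filtration on a ring `A` by additive subgroups (= ℤ-submodules):
an ascending chain with `F n * F m ⊆ F (n+m)` and `1 ∈ F 0`. -/
def IsZFiltrationOfRing {A : Type*} [Ring A] (F : ℤ → Submodule ℤ A) : Prop :=
  Monotone F ∧ (1 : A) ∈ F 0 ∧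
    ∀ (n m : ℤ), ∀ x ∈ F n, ∀ y ∈ F m, x * y ∈ F (n + m)

/-- A left `F`-glider ideal inside `A`: a descending chain of additive subgroups
with `F i * M j ⊆ M (j - i)` for `i ≤ j`. -/
def IsGlider {A : Type*} [Ring A] (F : ℤ → Submodule ℤ A) (M : ℕ → Submodule ℤ A) : Prop :=
  Antitone M ∧
    ∀ (i : ℤ) (j : ℕ), i ≤ (j : ℤ) →
      ∀ a ∈ F i, ∀ m ∈ M j, a * m ∈ M ((j : ℤ) - i).toNat

/-- The body of a glider: `B(M) = ⋂ᵢ Mᵢ`. -/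
def gliderBody {A : Type*} [Ring A] (M : ℕ → Submodule ℤ A) : Submodule ℤ A := ⨅ i, M i

/-- Triviality of a subglider `N` of `M`: type T1, T2 or T3. -/
def IsTrivialSubglider {A : Type*} [Ring A] (M N : ℕ → Submodule ℤ A) : Prop :=
  (∃ n, N n = gliderBody N ∧ M n ≠ gliderBody M) ∨
  (∃ n, N n = ⊥ ∧ M n ≠ ⊥) ∨
  (∃ α : ℕ → ℕ, Monotone α ∧ (∀ n, N n = M (α n)) ∧
      ∀ m n : ℕ, m ≤ n → (α (n - m) : ℤ) ≤ (α n : ℤ) - (m : ℤ))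

/-- An irreducible glider: every subglider is trivial. -/
def IsIrreducibleGlider {A : Type*} [Ring A] (F : ℤ → Submodule ℤ A)
    (M : ℕ → Submodule ℤ A) : Prop :=
  IsGlider F M ∧
    ∀ N : ℕ → Submodule ℤ A, IsGlider F N → (∀ i, N i ≤ M i) → IsTrivialSubglider M N

/-- Let `A` be a central simple algebra over a field `K` with an exhaustive, separated
filtration `FA` extending a filtration `FK` on `K` with nontrivial negative part.
If `M` is an irreducible left `FA`-glider ideal which is not a left `A`-module,
then `M` has infinite essential length. -/
theorem stmt_10 {K A : Type*} [Field K] [Ring A] [Algebra K A]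
    [FiniteDimensional K A] [Algebra.IsCentral K A] [IsSimpleRing A]
    (FA : ℤ → Submodule ℤ A) (FK : ℤ → Submodule ℤ K)
    (hFA : IsZFiltrationOfRing FA)
    (hexh : ∀ a : A, ∃ n : ℤ, a ∈ FA n)
    (hsep : ∀ a : A, (∀ n : ℤ, a ∈ FA n) → a = 0)
    (hext : ∀ (n : ℤ) (x : K), algebraMap K A x ∈ FA n ↔ x ∈ FK n)
    (hneg : ∀ n : ℕ, FK (-(n : ℤ)) ≠ ⊥)
    (M : ℕ → Submodule ℤ A)
    (hirr : IsIrreducibleGlider FA M)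
    (hnotmod : ¬ ∀ a : A, ∀ m ∈ M 0, a * m ∈ M 0) :
    ∀ d : ℕ, ∃ n : ℕ, d < n ∧ M (n + 1) < M n := by

  obtain ⟨⟨hmono, hglide⟩, -⟩ := hirr
  by_contra h
  obtain ⟨d, hd⟩ := not_forall.mp h
  have hd' : ∀ n, d < n → ¬ M (n + 1) < M n := by
    intro n h1 h2
    exact hd ⟨n, h1, h2⟩
  -- the chain stabilizes: M n = M (d+1) for n ≥ d+1
  have heq : ∀ n, d < n → M (n + 1) = M n := fun n hn =>
    ((hmono (Nat.le_succ n)).lt_or_eq).resolve_left (hd' n hn)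
  have hstab : ∀ n, d + 1 ≤ n → M n = M (d + 1) := by
    intro n hn
    induction n with
    | zero => omega
    | succ k ih =>
      rcases Nat.lt_or_ge k (d+1) with hk | hk
      · have : k = d := by omega
        subst this; rfl
      · rw [heq k (by omega), ih hk]
  have hle : ∀ j, M (d + 1) ≤ M j := by
    intro j
    rcases le_or_gt j (d+1) with hj | hj
    · exact hmono hj
    · exact (hstab j (le_of_lt hj)).ge
  -- the body is an A-module
  have hbody : ∀ a : A, ∀ b : A, (∀ j, b ∈ M j) → ∀ t : ℕ, a * b ∈ M t := by
    intro a b hb t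
    obtain ⟨i, hi⟩ := hexh a
    have h1 : i ≤ ((t + i.toNat : ℕ) : ℤ) := by push_cast; omega
    have h2 := hglide i (t + i.toNat) h1 a hi b (hb _)
    refine hmono ?_ h2
    omega
  -- a nonzero element of FK (-(d+1))
  have hbot := hneg (d + 1)
  rw [Submodule.ne_bot_iff] at hbot
  obtain ⟨c, hc, hc0⟩ := hbot
  set b : A := algebraMap K A c with hbdef
  have hbFA : b ∈ FA (-((d + 1 : ℕ) : ℤ)) := (hext _ c).mpr hc
  -- c * m lies in the body for m ∈ M 0
  have hmem : ∀ m ∈ M 0, ∀ j : ℕ, b * m ∈ M j := by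
    intro m hm j
    have h1 : (-((d + 1 : ℕ) : ℤ)) ≤ ((0 : ℕ) : ℤ) := by push_cast; omega
    have h2 := hglide _ 0 h1 b hbFA m hm
    have h3 : (((0 : ℕ) : ℤ) - (-((d + 1 : ℕ) : ℤ))).toNat = d + 1 := by omega
    rw [h3] at h2
    exact hle j h2
  -- M 0 is contained in the body, hence is an A-module
  apply hnotmod
  intro a m hm
  have hinv : (algebraMap K A) c⁻¹ * b = 1 := by
    rw [hbdef, ← map_mul, inv_mul_cancel₀ hc0, map_one]
  have key : a * m = (a * algebraMap K A c⁻¹) * (b * m) := by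
    rw [mul_assoc, ← mul_assoc (algebraMap K A c⁻¹), hinv, one_mul]
  rw [key]
  exact hbody _ _ (hmem m hm) 0
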